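/- Let N ≥ 1 be an integer and let e_1, …, e_{N+2} denote the standard unit (column) vectors of ℝ^{N+2}. For 1 ≤ i < j ≤ N+1 set ξ_{ij} = (e_i − e_{i+1}) − (e_j − e_{j+1}) and A_{i,j} = (e_{i+1} − e_{j+1})ξ_{ij}ᵀ + ξ_{ij}(e_{i+1} − e_{j+1})ᵀ; for 1 ≤ i ≤ N+1 set B_i = e_{i+1}(e_i − e_{i+1})ᵀ + (e_i − e_{i+1})e_{i+1}ᵀ; set C = (e_{N+1} − e_{N+2})(e_{N+1} − e_{N+2})ᵀ. If X is a real symmetric positive semidefinite matrix of order N+2 satisfying trace(A_{i,j}·X) ≥ 0 for all 1 ≤ i < j ≤ N+1, trace(B_i·X) ≥ 0 for all 1 ≤ i ≤ N+1, and X_{1,1} = 1, then trace(C·X) ≤ N^N/(N+1)^{N+1}. -/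

import Mathlib

open Matrix

/-- The `k`-th standard unit vector of `ℝ^(N+2)`, with 1-based index `k ∈ {1, …, N+2}`. -/
noncomputable def pepUnitVec (N : ℕ) (k : ℕ) : Fin (N + 2) → ℝ :=
  fun m => if (m : ℕ) + 1 = k then 1 else 0

/-- `ξ_{ij} = (e_i − e_{i+1}) − (e_j − e_{j+1})`. -/
noncomputable def pepXi (N : ℕ) (i j : ℕ) : Fin (N + 2) → ℝ :=
  (pepUnitVec N i - pepUnitVec N (i + 1)) - (pepUnitVec N j - pepUnitVec N (j + 1))

/-- `A_{i,j} = (e_{i+1} − e_{j+1})ξ_{ij}ᵀ + ξ_{ij}(e_{i+1} − e_{j+1})ᵀ`. -/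
noncomputable def pepMatA (N : ℕ) (i j : ℕ) : Matrix (Fin (N + 2)) (Fin (N + 2)) ℝ :=
  vecMulVec (pepUnitVec N (i + 1) - pepUnitVec N (j + 1)) (pepXi N i j) +
    vecMulVec (pepXi N i j) (pepUnitVec N (i + 1) - pepUnitVec N (j + 1))

/-- `B_i = e_{i+1}(e_i − e_{i+1})ᵀ + (e_i − e_{i+1})e_{i+1}ᵀ`. -/
noncomputable def pepMatB (N : ℕ) (i : ℕ) : Matrix (Fin (N + 2)) (Fin (N + 2)) ℝ :=
  vecMulVec (pepUnitVec N (i + 1)) (pepUnitVec N i - pepUnitVec N (i + 1)) +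
    vecMulVec (pepUnitVec N i - pepUnitVec N (i + 1)) (pepUnitVec N (i + 1))

/-- `C = (e_{N+1} − e_{N+2})(e_{N+1} − e_{N+2})ᵀ`. -/
noncomputable def pepMatC (N : ℕ) : Matrix (Fin (N + 2)) (Fin (N + 2)) ℝ :=
  vecMulVec (pepUnitVec N (N + 1) - pepUnitVec N (N + 2))
    (pepUnitVec N (N + 1) - pepUnitVec N (N + 2))

/-! ### Auxiliary machinery -/

/-- The quadratic-form values `eₐᵀ X e_b`. -/
noncomputable def pepQ (N : ℕ) (X : Matrix (Fin (N+2)) (Fin (N+2)) ℝ) (a b : ℕ) : ℝ :=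
  pepUnitVec N a ⬝ᵥ X.mulVec (pepUnitVec N b)

/-- The ratio `N/(N+1)`. -/
noncomputable def pepR (N : ℕ) : ℝ := (N : ℝ) / ((N : ℝ) + 1)

/-- The partial-sum remainder of the dual certificate. -/
noncomputable def pepP (N : ℕ) (X : Matrix (Fin (N+2)) (Fin (N+2)) ℝ) (m : ℕ) : ℝ :=
  pepR N ^ (N - m) *
    ( ((m:ℝ)+1)/((N:ℝ)+1) * pepQ N X (m+1) (m+1)
      - 2*(m:ℝ)/((N:ℝ)+1) * pepQ N X (m+1) (m+2)
      + (m:ℝ)*((N:ℝ)-1)/(((N:ℝ)+1)*(N:ℝ)) * pepQ N X (m+2) (m+2) )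

section Aux
variable {N : ℕ} {X : Matrix (Fin (N+2)) (Fin (N+2)) ℝ}

lemma pep_trace_vmv (a b : Fin (N+2) → ℝ) :
    (vecMulVec a b * X).trace = b ⬝ᵥ X.mulVec a := by
  simp only [Matrix.trace, Matrix.diag, Matrix.mul_apply, vecMulVec_apply, dotProduct,
    Matrix.mulVec, Finset.mul_sum]
  rw [Finset.sum_comm]
  apply Finset.sum_congr rfl; intros; apply Finset.sum_congr rfl; intros; ring

lemma pepQ_symm (h : X.IsSymm) (a b : ℕ) : pepQ N X a b = pepQ N X b a := by
  unfold pepQ; rw [dotProduct_mulVec, ← mulVec_transpose, h.eq, dotProduct_comm]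

lemma pep_trB (k : ℕ) : (pepMatB N k * X).trace =
    pepQ N X k (k+1) + pepQ N X (k+1) k - 2 * pepQ N X (k+1) (k+1) := by
  unfold pepMatB
  rw [add_mul, Matrix.trace_add, pep_trace_vmv, pep_trace_vmv]
  simp only [pepQ, mulVec_sub, dotProduct_sub, sub_dotProduct]
  ring

lemma pep_trA (k : ℕ) : (pepMatA N (k+1) (k+2) * X).trace =
    pepQ N X (k+1) (k+2) - pepQ N X (k+1) (k+3) - 2 * pepQ N X (k+2) (k+2)
      + 2 * pepQ N X (k+2) (k+3) + pepQ N X (k+3) (k+2) - pepQ N X (k+3) (k+3)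
      + (pepQ N X (k+2) (k+1) - 2 * pepQ N X (k+2) (k+2) + pepQ N X (k+2) (k+3)
      - pepQ N X (k+3) (k+1) + 2 * pepQ N X (k+3) (k+2) - pepQ N X (k+3) (k+3)) := by
  unfold pepMatA pepXi
  rw [add_mul, Matrix.trace_add, pep_trace_vmv, pep_trace_vmv]
  simp only [pepQ, mulVec_sub, dotProduct_sub, sub_dotProduct,
    show k+1+1 = k+2 from rfl, show k+2+1 = k+3 from rfl]
  ring

lemma pep_trC : (pepMatC N * X).trace =
    pepQ N X (N+1) (N+1) - pepQ N X (N+1) (N+2) - pepQ N X (N+2) (N+1)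
      + pepQ N X (N+2) (N+2) := by
  unfold pepMatC
  rw [pep_trace_vmv]
  simp only [pepQ, mulVec_sub, dotProduct_sub, sub_dotProduct]
  ring

lemma pepQ_psd (h : X.PosSemidef) (c1 c2 c3 : ℝ) (a1 a2 a3 : ℕ) :
    0 ≤ c1*c1 * pepQ N X a1 a1 + c1*c2 * pepQ N X a1 a2 + c1*c3 * pepQ N X a1 a3
      + c2*c1 * pepQ N X a2 a1 + c2*c2 * pepQ N X a2 a2 + c2*c3 * pepQ N X a2 a3
      + c3*c1 * pepQ N X a3 a1 + c3*c2 * pepQ N X a3 a2 + c3*c3 * pepQ N X a3 a3 := by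
  have key : 0 ≤ (c1 • pepUnitVec N a1 + c2 • pepUnitVec N a2 + c3 • pepUnitVec N a3) ⬝ᵥ
      X.mulVec (c1 • pepUnitVec N a1 + c2 • pepUnitVec N a2 + c3 • pepUnitVec N a3) := by
    simpa using h.dotProduct_mulVec_nonneg (c1 • pepUnitVec N a1 + c2 • pepUnitVec N a2 + c3 • pepUnitVec N a3)
  calc (0:ℝ) ≤ _ := key
    _ = _ := by
      simp only [pepQ, mulVec_add, mulVec_smul, dotProduct_add, dotProduct_smul,
        add_dotProduct, smul_dotProduct, smul_eq_mul]
      ring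

lemma pepQ_one (hX11 : X 0 0 = 1) : pepQ N X 1 1 = 1 := by
  have hz : ∀ b : Fin (N+2), b ≠ 0 → (if (b:ℕ) + 1 = 1 then (1:ℝ) else 0) = 0 := by
    intro b hb
    have : (b:ℕ) ≠ 0 := fun h0 => hb (Fin.ext (by rw [h0]; simp))
    simp [this]
  simp only [pepQ, pepUnitVec, dotProduct, Matrix.mulVec]
  rw [Finset.sum_eq_single (0 : Fin (N+2))]
  · simp only [Fin.val_zero, zero_add, if_pos rfl, one_mul, dotProduct]
    rw [Finset.sum_eq_single (0 : Fin (N+2))]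
    · simp [hX11]
    · intro b _ hb; rw [hz b hb, mul_zero]
    · simp
  · intro b _ hb; rw [hz b hb, zero_mul]
  · simp


set_option maxHeartbeats 2000000 in
lemma pepP_step (hN : 1 ≤ N) (hXsymm : X.IsSymm) (hXpsd : X.PosSemidef)
    (m : ℕ) (hm : m + 1 ≤ N)
    (hA : 0 ≤ (pepMatA N (m+1) (m+2) * X).trace)
    (hB : 0 ≤ (pepMatB N (m+1) * X).trace) :
    pepP N X (m+1) ≤ pepP N X m := by
  have hNR : (1:ℝ) ≤ (N:ℝ) := by exact_mod_cast hN
  have hN0 : (N:ℝ) ≠ 0 := by linarith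
  have hN1 : ((N:ℝ) + 1) ≠ 0 := by linarith
  have hmN : (m:ℝ) + 1 ≤ (N:ℝ) := by exact_mod_cast hm
  obtain ⟨j, hj1, hj2⟩ : ∃ j, N - (m+1) = j ∧ N - m = j + 1 :=
    ⟨N - (m+1), rfl, by omega⟩
  have hrpos : (0:ℝ) ≤ pepR N := by unfold pepR; positivity
  have s1 : pepQ N X (m+2) (m+1) = pepQ N X (m+1) (m+2) := pepQ_symm hXsymm _ _
  have s2 : pepQ N X (m+3) (m+1) = pepQ N X (m+1) (m+3) := pepQ_symm hXsymm _ _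
  have s3 : pepQ N X (m+3) (m+2) = pepQ N X (m+2) (m+3) := pepQ_symm hXsymm _ _
  rw [pep_trA m, s1, s2, s3] at hA
  rw [pep_trB (m+1), show m+1+1 = m+2 from rfl, s1] at hB
  have hQf := pepQ_psd hXpsd (pepR N) (-2 * pepR N) 1 (m+1) (m+2) (m+3)
  rw [s1, s2, s3] at hQf
  have hlam : (0:ℝ) ≤ ((m:ℝ)+1)/((N:ℝ)+1) * pepR N ^ j := by positivity
  have hmu : (0:ℝ) ≤ ((N:ℝ)-1-(m:ℝ))/(((N:ℝ)+1)^2) * pepR N ^ j := by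
    apply mul_nonneg
    · apply div_nonneg
      · linarith
      · positivity
    · positivity
  have hD : (0:ℝ) ≤ ((m:ℝ)+1)/(N:ℝ) * pepR N ^ j := by positivity
  have key : pepP N X m = pepP N X (m+1)
      + (((m:ℝ)+1)/((N:ℝ)+1) * pepR N ^ j) *
        (pepQ N X (m+1) (m+2) - pepQ N X (m+1) (m+3) - 2 * pepQ N X (m+2) (m+2)
          + 2 * pepQ N X (m+2) (m+3) + pepQ N X (m+2) (m+3) - pepQ N X (m+3) (m+3)
          + (pepQ N X (m+1) (m+2) - 2 * pepQ N X (m+2) (m+2) + pepQ N X (m+2) (m+3)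
          - pepQ N X (m+1) (m+3) + 2 * pepQ N X (m+2) (m+3) - pepQ N X (m+3) (m+3)))
      + (((N:ℝ)-1-(m:ℝ))/(((N:ℝ)+1)^2) * pepR N ^ j) *
        (pepQ N X (m+1) (m+2) + pepQ N X (m+1) (m+2) - 2 * pepQ N X (m+2) (m+2))
      + (((m:ℝ)+1)/(N:ℝ) * pepR N ^ j) *
        (pepR N * pepR N * pepQ N X (m+1) (m+1)
          + pepR N * (-2 * pepR N) * pepQ N X (m+1) (m+2)
          + pepR N * 1 * pepQ N X (m+1) (m+3)
          + (-2 * pepR N) * pepR N * pepQ N X (m+1) (m+2)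
          + (-2 * pepR N) * (-2 * pepR N) * pepQ N X (m+2) (m+2)
          + (-2 * pepR N) * 1 * pepQ N X (m+2) (m+3)
          + 1 * pepR N * pepQ N X (m+1) (m+3)
          + 1 * (-2 * pepR N) * pepQ N X (m+2) (m+3)
          + 1 * 1 * pepQ N X (m+3) (m+3)) := by
    simp only [pepP, hj1, hj2, pow_succ, pepR,
      show m+1+1 = m+2 from rfl, show m+1+2 = m+3 from rfl]
    push_cast
    field_simp
    ring
  have k1 := mul_nonneg hlam hA
  have k2 := mul_nonneg hmu hB
  have k3 := mul_nonneg hD hQf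
  linarith [k1, k2, k3]

end Aux


/-- Optimal value bound for the SDP reformulation of the performance estimation
problem of the proximal point algorithm: any feasible `X` satisfies
`trace(C·X) ≤ N^N/(N+1)^(N+1)`. -/
theorem pep_sdp_optimal_value_bound (N : ℕ) (hN : 1 ≤ N)
    (X : Matrix (Fin (N + 2)) (Fin (N + 2)) ℝ)
    (hXsymm : X.IsSymm) (hXpsd : X.PosSemidef)
    (hXA : ∀ i j : ℕ, 1 ≤ i → i < j → j ≤ N + 1 → 0 ≤ (pepMatA N i j * X).trace)
    (hXB : ∀ i : ℕ, 1 ≤ i → i ≤ N + 1 → 0 ≤ (pepMatB N i * X).trace)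
    (hX11 : X 0 0 = 1) :
    (pepMatC N * X).trace ≤ (N : ℝ) ^ N / ((N : ℝ) + 1) ^ (N + 1) := by
  have hNR : (1:ℝ) ≤ (N:ℝ) := by exact_mod_cast hN
  have hN0 : (N:ℝ) ≠ 0 := by linarith
  have hN1 : ((N:ℝ) + 1) ≠ 0 := by linarith
  have step : ∀ m, m + 1 ≤ N → pepP N X (m+1) ≤ pepP N X m := fun m hm =>
    pepP_step hN hXsymm hXpsd m hm
      (hXA (m+1) (m+2) (by omega) (by omega) (by omega))
      (hXB (m+1) (by omega) (by omega))
  have mono : ∀ m, m ≤ N → pepP N X m ≤ pepP N X 0 := by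
    intro m
    induction m with
    | zero => intro _; exact le_refl _
    | succ k ih => intro h; exact (step k h).trans (ih (by omega))
  have base : pepP N X 0 = (N:ℝ) ^ N / ((N:ℝ) + 1) ^ (N + 1) := by
    simp only [pepP, pepR, Nat.sub_zero, show (0:ℕ)+1 = 1 from rfl, pepQ_one hX11]
    push_cast
    rw [div_pow]
    field_simp
    ring
  have hBn := hXB (N+1) (by omega) (by omega)
  rw [pep_trB (N+1), show N+1+1 = N+2 from rfl, pepQ_symm hXsymm (N+2) (N+1)] at hBn
  have key2 : pepP N X N =
      (pepQ N X (N+1) (N+1) - pepQ N X (N+1) (N+2) - pepQ N X (N+1) (N+2)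
        + pepQ N X (N+2) (N+2))
      + (1/((N:ℝ)+1)) * (pepQ N X (N+1) (N+2) + pepQ N X (N+1) (N+2)
        - 2 * pepQ N X (N+2) (N+2)) := by
    simp only [pepP, Nat.sub_self, pow_zero]
    field_simp
    ring
  have hfin : (pepMatC N * X).trace ≤ pepP N X N := by
    rw [pep_trC, pepQ_symm hXsymm (N+2) (N+1)]
    have hpos : (0:ℝ) ≤ 1/((N:ℝ)+1) := by positivity
    have := mul_nonneg hpos hBn
    linarith [key2, this]
  calc (pepMatC N * X).trace ≤ pepP N X N := hfin
    _ ≤ pepP N X 0 := mono N le_rfl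
    _ = (N:ℝ) ^ N / ((N:ℝ) + 1) ^ (N + 1) := base
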